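/- Let V be a variety of closure algebras containing an algebra M with an element a such that ◇◻a > ◻a (i.e., V is not a variety of monadic algebras). Then V contains the four-element closure algebra 4 (the Boolean algebra with atoms a, ¬a where a is open, ¬a is closed: ◻a = a, ◇¬a = ¬a, ◇a = 1, ◻¬a = 0). Equivalently, a variety of closure algebras omits 4 if and only if it satisfies the monadic identity ◇◻x = ◻x. -/

import Mathlib

/-- A modal algebra: a Boolean algebra with a unary operation `◇` satisfying
`◇⊥ = ⊥` and `◇(a ⊔ b) = ◇a ⊔ ◇b`. -/
class ModalAlg (M : Type) extends BooleanAlgebra M where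
  dia : M → M
  dia_bot : dia ⊥ = ⊥
  dia_sup : ∀ a b : M, dia (a ⊔ b) = dia a ⊔ dia b

/-- A closure algebra: a modal algebra satisfying `a ≤ ◇a = ◇◇a`. -/
class ClosAlg (M : Type) extends ModalAlg M where
  le_dia : ∀ a : M, a ≤ dia a
  dia_dia : ∀ a : M, dia (dia a) = dia a

/-- The possibility operator `◇`. -/
def dia {M : Type} [ModalAlg M] : M → M := ModalAlg.dia

/-- The necessity operator `◻x = ¬◇¬x`. -/
def box {M : Type} [ModalAlg M] (a : M) : M := (dia aᶜ)ᶜ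

/-- A homomorphism of closure algebras: it preserves the Boolean structure
(`⊔`, `ᶜ`, `⊥`, and hence `⊓`, `⊤`) and `◇`. -/
structure ClosHom (M N : Type) [ClosAlg M] [ClosAlg N] where
  toFun : M → N
  map_sup : ∀ a b : M, toFun (a ⊔ b) = toFun a ⊔ toFun b
  map_compl : ∀ a : M, toFun aᶜ = (toFun a)ᶜ
  map_bot : toFun ⊥ = ⊥
  map_dia : ∀ a : M, toFun (dia a) = dia (toFun a)

/-- The two-element closure algebra `2`, with identity `◇`. -/
instance : ModalAlg Bool :=
  { (inferInstance : BooleanAlgebra Bool) with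
    dia := id
    dia_bot := rfl
    dia_sup := fun _ _ => rfl }

instance : ClosAlg Bool :=
  { (inferInstance : ModalAlg Bool) with
    le_dia := fun _ => le_rfl
    dia_dia := fun _ => rfl }

/-- Pointwise closure algebra structure on a product. -/
instance piClosAlg {I : Type} (A : I → Type) [∀ i, ClosAlg (A i)] : ClosAlg (∀ i, A i) :=
  { (inferInstance : BooleanAlgebra (∀ i, A i)) with
    dia := fun x i => dia (x i)
    dia_bot := funext fun _ => ModalAlg.dia_bot
    dia_sup := fun a b => funext fun i => ModalAlg.dia_sup (a i) (b i)
    le_dia := fun a i => ClosAlg.le_dia (a i)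
    dia_dia := fun a => funext fun i => ClosAlg.dia_dia (a i) }

/-- A bundled closure algebra. -/
structure CAlg where
  carrier : Type
  [str : ClosAlg carrier]

attribute [instance] CAlg.str

/-- Direct product of a family of closure algebras. -/
def CAlg.pi {I : Type} (A : I → CAlg) : CAlg := ⟨∀ i, (A i).carrier⟩

/-- A class of closure algebras is a variety if it is closed under homomorphic images,
subalgebras (injective homomorphisms) and direct products. -/
def IsCAVariety (V : Set CAlg) : Prop :=
  (∀ A ∈ V, ∀ B : CAlg, ∀ f : ClosHom A.carrier B.carrier,
      Function.Surjective f.toFun → B ∈ V) ∧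
  (∀ A : CAlg, ∀ B ∈ V, ∀ f : ClosHom A.carrier B.carrier,
      Function.Injective f.toFun → A ∈ V) ∧
  (∀ (I : Type) (A : I → CAlg), (∀ i, A i ∈ V) → CAlg.pi A ∈ V)

/-- The "simple" closure structure on a Boolean algebra: `◇x = ⊤` for `x ≠ ⊥`. -/
def simpleClos (B : Type) [BooleanAlgebra B] [DecidableEq B] : ClosAlg B :=
  { (inferInstance : BooleanAlgebra B) with
    dia := fun x => if x = ⊥ then ⊥ else ⊤
    dia_bot := by simp
    dia_sup := by
      intro a b
      by_cases ha : a = ⊥ <;> by_cases hb : b = ⊥ <;>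
        simp [ha, hb, sup_eq_bot_iff]
    le_dia := by intro a; by_cases h : a = ⊥ <;> simp [h]
    dia_dia := by
      intro a
      by_cases h : a = ⊥ <;> by_cases h2 : (⊤ : B) = ⊥ <;> simp [h, h2] }

/-- `◇` of the four-element closure algebra `4`: the four-element Boolean algebra with
atoms `a = (true, false)` (open) and `¬a = (false, true)` (closed): `◇⊥ = ⊥`,
`◇(¬a) = ¬a`, `◇a = ⊤`, `◇⊤ = ⊤`. -/
def fourDia (x : Bool × Bool) : Bool × Bool :=
  if x = (false, false) then (false, false)
  else if x = (false, true) then (false, true)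
  else (true, true)

noncomputable def fourInst : ClosAlg (Bool × Bool) :=
  { (inferInstance : BooleanAlgebra (Bool × Bool)) with
    dia := fourDia
    dia_bot := by decide
    dia_sup := by decide
    le_dia := by decide
    dia_dia := by decide }

/-- The four-element closure algebra `4`. -/
noncomputable def Four : CAlg := @CAlg.mk (Bool × Bool) fourInst

section
variable {M : Type} [ClosAlg M]

lemma dia_sup' (a b : M) : dia (a ⊔ b) = dia a ⊔ dia b := ModalAlg.dia_sup a b
lemma dia_bot' : dia (⊥ : M) = ⊥ := ModalAlg.dia_bot
lemma le_dia' (a : M) : a ≤ dia a := ClosAlg.le_dia a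
lemma dia_dia' (a : M) : dia (dia a) = dia a := ClosAlg.dia_dia a

lemma dia_mono {a b : M} (h : a ≤ b) : dia a ≤ dia b := by
  have h2 : dia (a ⊔ b) = dia a ⊔ dia b := dia_sup' a b
  rw [sup_eq_right.mpr h] at h2
  rw [h2]; exact le_sup_left

lemma dia_top : dia (⊤ : M) = ⊤ := le_antisymm le_top (le_dia' ⊤)

lemma exists_d (a : M) (h : box a < dia (box a)) :
    ∃ d : M, dia dᶜ = dᶜ ∧ dia d = ⊤ ∧ d ≠ ⊤ := by
  set b := box a with hb
  set c := dia b with hc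
  have hbopen : dia bᶜ = bᶜ := by
    rw [hb]; simp only [box, compl_compl]; exact dia_dia' _
  have hcc : dia c = c := dia_dia' b
  set b0 := box c with hb0
  have hb0open : dia b0ᶜ = b0ᶜ := by
    rw [hb0]; simp only [box, compl_compl]; exact dia_dia' _
  have hb0le : b0 ≤ c := by
    rw [hb0]; show (dia cᶜ)ᶜ ≤ c
    rw [compl_le_iff_compl_le]; exact le_dia' cᶜ
  have hbb0 : b ≤ b0 := by
    rw [hb0]; show b ≤ (dia cᶜ)ᶜ
    rw [le_compl_iff_le_compl, ← hbopen]
    exact dia_mono (compl_le_compl (le_dia' b))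
  have hdiab0 : dia b0 = c := le_antisymm (hcc ▸ dia_mono hb0le) (dia_mono hbb0)
  -- choose e
  obtain ⟨e, heopen, helt, hde⟩ : ∃ e : M, dia eᶜ = eᶜ ∧ e < c ∧ dia e = c := by
    by_cases hbc : b0 = c
    · exact ⟨b, hbopen, h, rfl⟩
    · exact ⟨b0, hb0open, lt_of_le_of_ne hb0le hbc, hdiab0⟩
  refine ⟨cᶜ ⊔ e, ?_, ?_, ?_⟩
  · rw [compl_sup, compl_compl]
    refine le_antisymm ?_ (le_dia' _)
    refine le_inf ?_ ?_
    · exact (dia_mono inf_le_left).trans hcc.le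
    · exact (dia_mono inf_le_right).trans heopen.le
  · rw [dia_sup', hde]
    rw [eq_top_iff]
    calc (⊤ : M) = cᶜ ⊔ c := (compl_sup_eq_top).symm
    _ ≤ dia cᶜ ⊔ c := sup_le_sup_right (le_dia' _) c
  · intro htop
    have : c ≤ e := by
      have h1 : c ⊓ (cᶜ ⊔ e) = c := by rw [htop, inf_top_eq]
      rw [inf_sup_left, inf_compl_eq_bot, bot_sup_eq] at h1
      exact h1 ▸ inf_le_right
    exact absurd this (not_le_of_gt helt)

end

section FourEmbed
variable {M : Type} [ClosAlg M]

lemma four_sup (p q : Bool × Bool) :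
    (p ⊔ q : @CAlg.carrier Four) = (p.1 || q.1, p.2 || q.2) := by
  rcases p with ⟨x, y⟩; rcases q with ⟨u, v⟩
  cases x <;> cases y <;> cases u <;> cases v <;> rfl

lemma four_compl (p : Bool × Bool) :
    (pᶜ : @CAlg.carrier Four) = (!p.1, !p.2) := by
  rcases p with ⟨x, y⟩; cases x <;> cases y <;> rfl

lemma four_bot : (⊥ : @CAlg.carrier Four) = (false, false) := rfl

lemma four_dia (p : Bool × Bool) : (dia p : @CAlg.carrier Four) = fourDia p := rfl

lemma four_hom (d : M) (h1 : dia dᶜ = dᶜ) (h2 : dia d = ⊤) (h3 : d ≠ ⊤) :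
    ∃ f : ClosHom Four.carrier M, Function.Injective f.toFun := by
  have hnt : (⊥ : M) ≠ ⊤ := by
    intro hbt
    exact h3 (le_antisymm le_top (hbt ▸ bot_le))
  have hdb : d ≠ ⊥ := by
    intro hdb
    exact hnt (by rw [← dia_bot', ← hdb, h2])
  have hdc : d ≠ dᶜ := by
    intro hdd
    exact hdb (by rw [← inf_idem d]; nth_rewrite 2 [hdd]; exact inf_compl_eq_bot)
  have hcb : dᶜ ≠ ⊥ := fun hcb => h3 (by rw [← compl_compl d, hcb, compl_bot])
  have hct : dᶜ ≠ ⊤ := fun hct => hdb (by rw [← compl_compl d, hct, compl_top])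
  have htop : d ⊔ dᶜ = ⊤ := sup_compl_eq_top
  refine ⟨⟨fun p => (cond p.1 d ⊥) ⊔ (cond p.2 dᶜ ⊥), ?_, ?_, ?_, ?_⟩, ?_⟩
  · intro p q
    erw [four_sup]
    rcases p with ⟨x, y⟩; rcases q with ⟨u, v⟩
    cases x <;> cases y <;> cases u <;> cases v <;>
      simp
  · intro p
    erw [four_compl]
    rcases p with ⟨x, y⟩
    cases x <;> cases y <;> simp [htop]
  · show (cond (⊥ : @CAlg.carrier Four).1 d ⊥) ⊔ (cond (⊥ : @CAlg.carrier Four).2 dᶜ ⊥) = ⊥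
    rw [four_bot]; simp
  · intro p
    erw [four_dia]
    rcases p with ⟨x, y⟩
    cases x <;> cases y <;> simp [fourDia, dia_bot', h1, h2, htop, dia_top]
  · intro p q hpq
    rcases p with ⟨x, y⟩; rcases q with ⟨u, v⟩
    cases x <;> cases y <;> cases u <;> cases v <;>
      simp only [cond_true, cond_false, sup_bot_eq, bot_sup_eq, sup_idem, htop] at hpq <;>
      first
        | rfl
        | exact absurd hpq.symm hdb
        | exact absurd hpq hdc | exact absurd hpq.symm hdc
        | exact absurd hpq.symm hcb
        | exact absurd hpq hnt | exact absurd hpq.symm hnt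
        | exact absurd hpq h3  | exact absurd hpq.symm h3
        | exact absurd hpq hct | exact absurd hpq.symm hct
        | exact absurd hpq hdb | exact absurd hpq hcb

end FourEmbed

/-- if a variety `V` of closure algebras contains an algebra `M` with an
element `a` such that `◇◻a > ◻a` (i.e. `V` is not a variety of monadic algebras), then
`V` contains the four-element closure algebra `4`; equivalently, a variety of closure
algebras omits `4` if and only if it satisfies the monadic identity `◇◻x = ◻x`. -/
theorem stmt9 (V : Set CAlg) (hV : IsCAVariety V) :
    ((∃ A ∈ V, ∃ a : A.carrier, box a < dia (box a)) → Four ∈ V) ∧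
    (Four ∉ V ↔ ∀ A ∈ V, ∀ x : A.carrier, dia (box x) = box x) := by
  have part1 : (∃ A ∈ V, ∃ a : A.carrier, box a < dia (box a)) → Four ∈ V := by
    rintro ⟨A, hA, a, ha⟩
    obtain ⟨d, h1, h2, h3⟩ := exists_d a ha
    obtain ⟨f, hf⟩ := four_hom d h1 h2 h3
    exact hV.2.1 Four A hA f hf
  refine ⟨part1, ?_, ?_⟩
  · intro h4 A hA x
    by_contra hne
    exact h4 (part1 ⟨A, hA, x, lt_of_le_of_ne (le_dia' _) (Ne.symm hne)⟩)
  · intro hmon h4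
    have hx := hmon Four h4 ((true, false) : Bool × Bool)
    have hb : (box ((true, false) : Bool × Bool) : @CAlg.carrier Four) = (true, false) := rfl
    rw [hb, four_dia] at hx
    exact (by decide : fourDia (true, false) ≠ ((true, false) : Bool × Bool)) hx
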